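/- Let ρ be a faithful non-maximally-mixed density matrix with extreme eigenvalues λ_min, λ_max. For any Hermitian A, B: |Tr(ρ[A,B])|² ≤ (4(λ_max − λ_min)²/(λ_max + λ_min)²)·[‖A‖²_ρ‖B‖²_ρ − ((1/2)Tr(ρ{A,B}))²], where ‖X‖²_ρ := Tr(ρX²). -/

import Mathlib

open Matrix ComplexOrder

/-- ℓ² triangle-type inequality. -/
lemma aux_two {ι : Type*} (s : Finset ι) (p q u : ι → ℝ)
    (hp : ∀ i ∈ s, 0 ≤ p i) (hq : ∀ i ∈ s, 0 ≤ q i) (hu : ∀ i ∈ s, 0 ≤ u i)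
    (h : ∀ i ∈ s, p i ^ 2 + q i ^ 2 ≤ u i ^ 2) :
    (∑ i ∈ s, p i) ^ 2 + (∑ i ∈ s, q i) ^ 2 ≤ (∑ i ∈ s, u i) ^ 2 := by
  set P := ∑ i ∈ s, p i with hP
  set Q := ∑ i ∈ s, q i with hQ
  have hPn : 0 ≤ P := Finset.sum_nonneg hp
  have hQn : 0 ≤ Q := Finset.sum_nonneg hq
  have hUn : 0 ≤ ∑ i ∈ s, u i := Finset.sum_nonneg hu
  have h1 : (0:ℝ) ≤ P ^ 2 + Q ^ 2 := by positivity
  have key : ∀ i ∈ s, p i * P + q i * Q ≤ u i * Real.sqrt (P ^ 2 + Q ^ 2) := by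
    intro i hi
    have h2 : (p i * P + q i * Q) ^ 2 ≤ (p i ^ 2 + q i ^ 2) * (P ^ 2 + Q ^ 2) := by
      nlinarith [sq_nonneg (p i * Q - q i * P)]
    have h3 : (p i ^ 2 + q i ^ 2) * (P ^ 2 + Q ^ 2)
        ≤ (u i * Real.sqrt (P ^ 2 + Q ^ 2)) ^ 2 := by
      rw [mul_pow, Real.sq_sqrt h1]
      exact mul_le_mul_of_nonneg_right (h i hi) h1
    have h4 : (0:ℝ) ≤ u i * Real.sqrt (P ^ 2 + Q ^ 2) :=
      mul_nonneg (hu i hi) (Real.sqrt_nonneg _)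
    have h5 : (0:ℝ) ≤ p i * P + q i * Q :=
      add_nonneg (mul_nonneg (hp i hi) hPn) (mul_nonneg (hq i hi) hQn)
    calc p i * P + q i * Q = Real.sqrt ((p i * P + q i * Q) ^ 2) :=
          (Real.sqrt_sq h5).symm
      _ ≤ Real.sqrt ((u i * Real.sqrt (P ^ 2 + Q ^ 2)) ^ 2) :=
          Real.sqrt_le_sqrt (le_trans h2 h3)
      _ = u i * Real.sqrt (P ^ 2 + Q ^ 2) := Real.sqrt_sq h4
  have hsum : P ^ 2 + Q ^ 2 ≤ (∑ i ∈ s, u i) * Real.sqrt (P ^ 2 + Q ^ 2) := by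
    calc P ^ 2 + Q ^ 2 = ∑ i ∈ s, (p i * P + q i * Q) := by
          rw [Finset.sum_add_distrib, ← Finset.sum_mul, ← Finset.sum_mul, ← hP, ← hQ]; ring
      _ ≤ ∑ i ∈ s, u i * Real.sqrt (P ^ 2 + Q ^ 2) := Finset.sum_le_sum key
      _ = (∑ i ∈ s, u i) * Real.sqrt (P ^ 2 + Q ^ 2) := by rw [Finset.sum_mul]
  have hs : Real.sqrt (P ^ 2 + Q ^ 2) ^ 2 = P ^ 2 + Q ^ 2 := Real.sq_sqrt h1
  nlinarith [Real.sqrt_nonneg (P ^ 2 + Q ^ 2),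
    sq_nonneg ((∑ i ∈ s, u i) - Real.sqrt (P ^ 2 + Q ^ 2))]

set_option maxHeartbeats 1000000 in
/-- The purely real core inequality. -/
lemma aux_main {n : ℕ} (lam : Fin n → ℝ) (r m na nb : Fin n → Fin n → ℝ)
    (lmin lmax : ℝ)
    (hlo : ∀ i, lmin ≤ lam i) (hhi : ∀ i, lam i ≤ lmax)
    (h0 : 0 < lmin) (hne : lmin < lmax)
    (hnan : ∀ i j, 0 ≤ na i j) (hnbn : ∀ i j, 0 ≤ nb i j)
    (hnas : ∀ i j, na j i = na i j) (hnbs : ∀ i j, nb j i = nb i j)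
    (hrs : ∀ i j, r j i = r i j) (hms : ∀ i j, m j i = - m i j)
    (hz : ∀ i j, (r i j) ^ 2 + (m i j) ^ 2 = (na i j * nb i j) ^ 2) :
    (∑ i, ∑ j, lam i * (2 * m i j)) ^ 2 ≤
      (4 * (lmax - lmin) ^ 2 / (lmax + lmin) ^ 2) *
        ((∑ i, ∑ j, lam i * (na i j) ^ 2) * (∑ i, ∑ j, lam i * (nb i j) ^ 2) -
          ((1 / 2) * (∑ i, ∑ j, lam i * (2 * r i j))) ^ 2) := by
  have hlpos : ∀ i, 0 < lam i := fun i => lt_of_lt_of_le h0 (hlo i)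
  have hmaxpos : 0 < lmax := h0.trans hne
  have hsumpos : 0 < lmax + lmin := by linarith
  set w : Fin n → Fin n → ℝ := fun i j => (lam i + lam j) / 2 with hw
  have hwpos : ∀ i j, 0 < w i j := fun i j => by
    have := hlpos i; have := hlpos j
    simp only [hw]; linarith
  -- symmetrization of symmetric sums
  have symm_sum : ∀ f : Fin n → Fin n → ℝ, (∀ i j, f j i = f i j) →
      ∑ i, ∑ j, lam i * f i j = ∑ i, ∑ j, w i j * f i j := by
    intro f hf
    have h2 : ∑ i, ∑ j, lam i * f i j = ∑ i, ∑ j, lam j * f i j := by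
      rw [Finset.sum_comm]
      exact Finset.sum_congr rfl fun x _ => Finset.sum_congr rfl fun y _ => by rw [hf]
    have expand : ∀ i j, w i j * f i j = lam i * f i j / 2 + lam j * f i j / 2 := by
      intro i j; simp only [hw]; ring
    simp only [expand, Finset.sum_add_distrib, ← Finset.sum_div]
    linarith [h2]
  -- antisymmetrization for m
  have hT : ∑ i, ∑ j, lam i * (2 * m i j) = ∑ i, ∑ j, (lam i - lam j) * m i j := by
    have h2 : ∑ i, ∑ j, lam j * m i j = - ∑ i, ∑ j, lam i * m i j := by
      calc ∑ i, ∑ j, lam j * m i j = ∑ j, ∑ i, lam j * m i j := Finset.sum_comm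
        _ = ∑ x, ∑ y, -(lam x * m x y) := by
            refine Finset.sum_congr rfl fun x _ => Finset.sum_congr rfl fun y _ => ?_
            rw [hms]; ring
        _ = - ∑ i, ∑ j, lam i * m i j := by
            simp [Finset.sum_neg_distrib]
    have e1 : ∀ i j : Fin n, lam i * (2 * m i j) = lam i * m i j + lam i * m i j :=
      fun i j => by ring
    have e2 : ∀ i j : Fin n, (lam i - lam j) * m i j = lam i * m i j - lam j * m i j :=
      fun i j => by ring
    simp only [e1, e2, Finset.sum_add_distrib, Finset.sum_sub_distrib]
    linarith [h2]
  rw [hT, symm_sum (fun i j => na i j ^ 2) (fun i j => by simp only [hnas]),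
    symm_sum (fun i j => nb i j ^ 2) (fun i j => by simp only [hnbs])]
  have hS : ∑ i, ∑ j, lam i * (2 * r i j) = 2 * ∑ i, ∑ j, w i j * r i j := by
    have hsym := symm_sum r hrs
    have e : ∀ i j : Fin n, lam i * (2 * r i j) = 2 * (lam i * r i j) := fun i j => by ring
    calc ∑ i, ∑ j, lam i * (2 * r i j) = ∑ i, ∑ j, 2 * (lam i * r i j) := by simp only [e]
      _ = 2 * ∑ i, ∑ j, lam i * r i j := by simp only [Finset.mul_sum]
      _ = 2 * ∑ i, ∑ j, w i j * r i j := by rw [hsym]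
  rw [hS]
  -- now pass to sums over pairs
  rw [← Fintype.sum_prod_type (f := fun p : Fin n × Fin n => (lam p.1 - lam p.2) * m p.1 p.2),
    ← Fintype.sum_prod_type (f := fun p : Fin n × Fin n => w p.1 p.2 * (na p.1 p.2) ^ 2),
    ← Fintype.sum_prod_type (f := fun p : Fin n × Fin n => w p.1 p.2 * (nb p.1 p.2) ^ 2),
    ← Fintype.sum_prod_type (f := fun p : Fin n × Fin n => w p.1 p.2 * r p.1 p.2)]
  set T := ∑ p : Fin n × Fin n, (lam p.1 - lam p.2) * m p.1 p.2 with hTdef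
  set X := ∑ p : Fin n × Fin n, w p.1 p.2 * (na p.1 p.2) ^ 2 with hXdef
  set Y := ∑ p : Fin n × Fin n, w p.1 p.2 * (nb p.1 p.2) ^ 2 with hYdef
  set S := ∑ p : Fin n × Fin n, w p.1 p.2 * r p.1 p.2 with hSdef
  set P := ∑ p : Fin n × Fin n, w p.1 p.2 * |m p.1 p.2| with hPdef
  set R := ∑ p : Fin n × Fin n, w p.1 p.2 * |r p.1 p.2| with hRdef
  set N := ∑ p : Fin n × Fin n, w p.1 p.2 * (na p.1 p.2 * nb p.1 p.2) with hNdef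
  have hPn : 0 ≤ P := Finset.sum_nonneg fun p _ =>
    mul_nonneg (hwpos p.1 p.2).le (abs_nonneg _)
  -- step 1 : |T| * (lmax + lmin) ≤ 2 (lmax - lmin) P
  have step1 : |T| * (lmax + lmin) ≤ 2 * (lmax - lmin) * P := by
    have hb : ∀ i j : Fin n, |lam i - lam j| * (lmax + lmin) ≤ (lmax - lmin) * (lam i + lam j) := by
      intro i j
      have p1 := mul_le_mul_of_nonneg_right (hhi i) h0.le
      have p2 := mul_le_mul_of_nonneg_left (hlo j) hmaxpos.le
      have p3 := mul_le_mul_of_nonneg_right (hhi j) h0.le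
      have p4 := mul_le_mul_of_nonneg_left (hlo i) hmaxpos.le
      rcases abs_cases (lam i - lam j) with ⟨he, _⟩ | ⟨he, _⟩ <;> rw [he] <;> nlinarith
    calc |T| * (lmax + lmin)
        ≤ (∑ p : Fin n × Fin n, |(lam p.1 - lam p.2) * m p.1 p.2|) * (lmax + lmin) :=
          mul_le_mul_of_nonneg_right (Finset.abs_sum_le_sum_abs _ _) hsumpos.le
      _ = ∑ p : Fin n × Fin n, |lam p.1 - lam p.2| * (lmax + lmin) * |m p.1 p.2| := by
          rw [Finset.sum_mul]
          exact Finset.sum_congr rfl fun p _ => by rw [abs_mul]; ring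
      _ ≤ ∑ p : Fin n × Fin n, (lmax - lmin) * (lam p.1 + lam p.2) * |m p.1 p.2| :=
          Finset.sum_le_sum fun p _ =>
            mul_le_mul_of_nonneg_right (hb p.1 p.2) (abs_nonneg _)
      _ = 2 * (lmax - lmin) * P := by
          rw [hPdef, Finset.mul_sum]
          exact Finset.sum_congr rfl fun p _ => by simp only [hw]; ring
  -- step 2 : P^2 + R^2 ≤ N^2
  have step2 : P ^ 2 + R ^ 2 ≤ N ^ 2 := by
    refine aux_two _ _ _ _ (fun p _ => mul_nonneg (hwpos p.1 p.2).le (abs_nonneg _))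
      (fun p _ => mul_nonneg (hwpos p.1 p.2).le (abs_nonneg _))
      (fun p _ => mul_nonneg (hwpos p.1 p.2).le (mul_nonneg (hnan _ _) (hnbn _ _))) ?_
    intro p _
    have := hz p.1 p.2
    have h1 : |m p.1 p.2| ^ 2 = m p.1 p.2 ^ 2 := sq_abs _
    have h2 : |r p.1 p.2| ^ 2 = r p.1 p.2 ^ 2 := sq_abs _
    nlinarith [sq_nonneg (w p.1 p.2)]
  -- step 3 : |S| ≤ R
  have step3 : |S| ≤ R := by
    refine (Finset.abs_sum_le_sum_abs _ _).trans (Finset.sum_le_sum fun p _ => ?_)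
    rw [abs_mul, abs_of_nonneg (hwpos p.1 p.2).le]
  -- step 4 : N^2 ≤ X * Y
  have step4 : N ^ 2 ≤ X * Y := by
    have cs := Finset.sum_mul_sq_le_sq_mul_sq Finset.univ
      (fun p : Fin n × Fin n => Real.sqrt (w p.1 p.2) * na p.1 p.2)
      (fun p : Fin n × Fin n => Real.sqrt (w p.1 p.2) * nb p.1 p.2)
    have e1 : ∀ p : Fin n × Fin n,
        (Real.sqrt (w p.1 p.2) * na p.1 p.2) * (Real.sqrt (w p.1 p.2) * nb p.1 p.2)
          = w p.1 p.2 * (na p.1 p.2 * nb p.1 p.2) := by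
      intro p
      rw [show (Real.sqrt (w p.1 p.2) * na p.1 p.2) * (Real.sqrt (w p.1 p.2) * nb p.1 p.2)
          = (Real.sqrt (w p.1 p.2) * Real.sqrt (w p.1 p.2)) * (na p.1 p.2 * nb p.1 p.2) from by
            ring, Real.mul_self_sqrt (hwpos p.1 p.2).le]
    have e2 : ∀ p : Fin n × Fin n,
        (Real.sqrt (w p.1 p.2) * na p.1 p.2) ^ 2 = w p.1 p.2 * (na p.1 p.2) ^ 2 := by
      intro p
      rw [mul_pow, Real.sq_sqrt (hwpos p.1 p.2).le]
    have e3 : ∀ p : Fin n × Fin n,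
        (Real.sqrt (w p.1 p.2) * nb p.1 p.2) ^ 2 = w p.1 p.2 * (nb p.1 p.2) ^ 2 := by
      intro p
      rw [mul_pow, Real.sq_sqrt (hwpos p.1 p.2).le]
    simp only [e1, e2, e3] at cs
    exact cs
  -- combine
  rw [div_mul_eq_mul_div, le_div_iff₀ (by positivity : (0:ℝ) < (lmax + lmin) ^ 2)]
  have habs : |T| ^ 2 = T ^ 2 := sq_abs T
  have hk : 0 ≤ lmax - lmin := by linarith
  have sq1 : (|T| * (lmax + lmin)) ^ 2 ≤ (2 * (lmax - lmin) * P) ^ 2 := by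
    have hL : 0 ≤ |T| * (lmax + lmin) := mul_nonneg (abs_nonneg _) hsumpos.le
    exact pow_le_pow_left₀ hL step1 2
  have hS2 : (1 / 2 * (2 * S)) ^ 2 = S ^ 2 := by ring
  rw [hS2]
  have hSR : S ^ 2 ≤ R ^ 2 := by
    have := sq_abs S
    nlinarith [step3, abs_nonneg S]
  have hP2 : P ^ 2 ≤ X * Y - S ^ 2 := by linarith [step2, step4, hSR]
  calc T ^ 2 * (lmax + lmin) ^ 2 = (|T| * (lmax + lmin)) ^ 2 := by
        rw [mul_pow, sq_abs]
    _ ≤ (2 * (lmax - lmin) * P) ^ 2 := sq1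
    _ = 4 * (lmax - lmin) ^ 2 * P ^ 2 := by ring
    _ ≤ 4 * (lmax - lmin) ^ 2 * (X * Y - S ^ 2) :=
        mul_le_mul_of_nonneg_left hP2 (by positivity)

set_option maxHeartbeats 1000000 in
/-- Norm form of the generalized Robertson relation with the anticommutator
term. -/
theorem gen_robertson_anticomm {n : ℕ} (ρ A B : Matrix (Fin n) (Fin n) ℂ)
    (hρ : ρ.PosDef) (hρtr : ρ.trace = 1)
    (hA : A.IsHermitian) (hB : B.IsHermitian)
    (lmin lmax : ℝ)
    (hmin : IsLeast (Set.range hρ.1.eigenvalues) lmin)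
    (hmax : IsGreatest (Set.range hρ.1.eigenvalues) lmax)
    (hne : lmin < lmax) :
    ‖(ρ * (A * B - B * A)).trace‖ ^ 2 ≤
      (4 * (lmax - lmin) ^ 2 / (lmax + lmin) ^ 2) *
        ((ρ * A * A).trace.re * (ρ * B * B).trace.re -
          ((1 / 2) * (ρ * (A * B + B * A)).trace.re) ^ 2) := by
  classical
  have hH := hρ.1
  set U : Matrix (Fin n) (Fin n) ℂ := (hH.eigenvectorUnitary : Matrix (Fin n) (Fin n) ℂ)
    with hUdef
  set lam : Fin n → ℝ := hH.eigenvalues with hlamdef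
  have hlo : ∀ i, lmin ≤ lam i := fun i => hmin.2 ⟨i, rfl⟩
  have hhi : ∀ i, lam i ≤ lmax := fun i => hmax.2 ⟨i, rfl⟩
  have h0 : 0 < lmin := by
    obtain ⟨i, hi⟩ := hmin.1
    rw [← hi]
    exact hρ.eigenvalues_pos i
  have hUU : U * star U = 1 := Matrix.mem_unitaryGroup_iff.mp hH.eigenvectorUnitary.2
  have hspec : ρ = U * Matrix.diagonal (RCLike.ofReal ∘ lam) * star U := hH.spectral_theorem
  -- trace formula
  have key : ∀ M : Matrix (Fin n) (Fin n) ℂ,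
      (ρ * M).trace = ∑ i, (lam i : ℂ) * (star U * M * U) i i := by
    intro M
    have e1 : ρ * M = U * (Matrix.diagonal (RCLike.ofReal ∘ lam) * (star U * M)) := by
      rw [hspec]; simp only [mul_assoc]
    rw [e1, Matrix.trace_mul_comm]
    have e2 : Matrix.diagonal (RCLike.ofReal ∘ lam) * (star U * M) * U
        = Matrix.diagonal (RCLike.ofReal ∘ lam) * (star U * M * U) := by
      simp only [mul_assoc]
    rw [e2]
    simp [Matrix.trace, Matrix.diag, Matrix.diagonal_mul, Function.comp]
  have hmul : ∀ M N : Matrix (Fin n) (Fin n) ℂ,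
      star U * (M * N) * U = (star U * M * U) * (star U * N * U) := by
    intro M N
    have h1 : (star U * M * U) * (star U * N * U) = star U * M * (U * star U) * (N * U) := by
      simp only [mul_assoc]
    rw [h1, hUU]
    simp only [mul_one, mul_assoc]
  have traceMN : ∀ M N : Matrix (Fin n) (Fin n) ℂ, (ρ * (M * N)).trace
      = ∑ i, ∑ j, (lam i : ℂ) * ((star U * M * U) i j * (star U * N * U) j i) := by
    intro M N
    rw [key]
    refine Finset.sum_congr rfl fun i _ => ?_
    rw [hmul, Matrix.mul_apply, Finset.mul_sum]
  set a : Matrix (Fin n) (Fin n) ℂ := star U * A * U with hadef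
  set b : Matrix (Fin n) (Fin n) ℂ := star U * B * U with hbdef
  have haH : a.IsHermitian := by
    rw [hadef, Matrix.star_eq_conjTranspose]
    exact Matrix.isHermitian_conjTranspose_mul_mul U hA
  have hbH : b.IsHermitian := by
    rw [hbdef, Matrix.star_eq_conjTranspose]
    exact Matrix.isHermitian_conjTranspose_mul_mul U hB
  have haconj : ∀ i j, a j i = (starRingEnd ℂ) (a i j) := by
    intro i j; rw [← haH.apply j i]; rfl
  have hbconj : ∀ i j, b j i = (starRingEnd ℂ) (b i j) := by
    intro i j; rw [← hbH.apply j i]; rfl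
  -- the four traces
  have hXA : (ρ * A * A).trace = ((∑ i, ∑ j, lam i * ‖a i j‖ ^ 2 : ℝ) : ℂ) := by
    rw [mul_assoc, traceMN A A]
    simp only [← hadef]
    push_cast
    refine Finset.sum_congr rfl fun i _ => Finset.sum_congr rfl fun j _ => ?_
    rw [haconj i j, Complex.mul_conj, ← Complex.sq_norm]
    push_cast
    ring
  have hXB : (ρ * B * B).trace = ((∑ i, ∑ j, lam i * ‖b i j‖ ^ 2 : ℝ) : ℂ) := by
    rw [mul_assoc, traceMN B B]
    simp only [← hbdef]
    push_cast
    refine Finset.sum_congr rfl fun i _ => Finset.sum_congr rfl fun j _ => ?_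
    rw [hbconj i j, Complex.mul_conj, ← Complex.sq_norm]
    push_cast
    ring
  have hAC : (ρ * (A * B + B * A)).trace
      = ((∑ i, ∑ j, lam i * (2 * (a i j * (starRingEnd ℂ) (b i j)).re) : ℝ) : ℂ) := by
    rw [mul_add, Matrix.trace_add, traceMN A B, traceMN B A]
    simp only [← hadef, ← hbdef]
    rw [← Finset.sum_add_distrib]
    push_cast
    refine Finset.sum_congr rfl fun i _ => ?_
    rw [← Finset.sum_add_distrib]
    refine Finset.sum_congr rfl fun j _ => ?_
    rw [haconj i j, hbconj i j]
    have e : b i j * (starRingEnd ℂ) (a i j)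
        = (starRingEnd ℂ) (a i j * (starRingEnd ℂ) (b i j)) := by
      rw [_root_.map_mul, Complex.conj_conj]
      ring
    rw [e, ← mul_add, Complex.add_conj]
    push_cast
    ring
  have hCm : (ρ * (A * B - B * A)).trace
      = ((∑ i, ∑ j, lam i * (2 * (a i j * (starRingEnd ℂ) (b i j)).im) : ℝ) : ℂ) * Complex.I := by
    rw [mul_sub, Matrix.trace_sub, traceMN A B, traceMN B A]
    simp only [← hadef, ← hbdef]
    rw [← Finset.sum_sub_distrib]
    push_cast
    rw [Finset.sum_mul]
    refine Finset.sum_congr rfl fun i _ => ?_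
    rw [← Finset.sum_sub_distrib, Finset.sum_mul]
    refine Finset.sum_congr rfl fun j _ => ?_
    rw [haconj i j, hbconj i j]
    have e : b i j * (starRingEnd ℂ) (a i j)
        = (starRingEnd ℂ) (a i j * (starRingEnd ℂ) (b i j)) := by
      rw [_root_.map_mul, Complex.conj_conj]
      ring
    rw [e, ← mul_sub, Complex.sub_conj]
    push_cast
    ring
  -- rewrite the goal
  rw [hCm, norm_mul, Complex.norm_real, Real.norm_eq_abs, Complex.norm_I, mul_one, hXA, hXB, hAC,
    Complex.ofReal_re, Complex.ofReal_re, Complex.ofReal_re, sq_abs]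
  exact aux_main lam
    (fun i j => (a i j * (starRingEnd ℂ) (b i j)).re)
    (fun i j => (a i j * (starRingEnd ℂ) (b i j)).im)
    (fun i j => ‖a i j‖) (fun i j => ‖b i j‖)
    lmin lmax hlo hhi h0 hne
    (fun i j => norm_nonneg _) (fun i j => norm_nonneg _)
    (fun i j => by beta_reduce; rw [haconj i j, Complex.norm_conj])
    (fun i j => by beta_reduce; rw [hbconj i j, Complex.norm_conj])
    (fun i j => by
      beta_reduce
      rw [haconj i j, hbconj i j, Complex.conj_conj]
      have : (starRingEnd ℂ) (a i j) * b i j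
          = (starRingEnd ℂ) (a i j * (starRingEnd ℂ) (b i j)) := by
        rw [_root_.map_mul, Complex.conj_conj]
      rw [this, Complex.conj_re])
    (fun i j => by
      beta_reduce
      rw [haconj i j, hbconj i j, Complex.conj_conj]
      have : (starRingEnd ℂ) (a i j) * b i j
          = (starRingEnd ℂ) (a i j * (starRingEnd ℂ) (b i j)) := by
        rw [_root_.map_mul, Complex.conj_conj]
      rw [this, Complex.conj_im])
    (fun i j => by
      beta_reduce
      have h1 : (a i j * (starRingEnd ℂ) (b i j)).re ^ 2
          + (a i j * (starRingEnd ℂ) (b i j)).im ^ 2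
          = ‖a i j * (starRingEnd ℂ) (b i j)‖ ^ 2 := by
        rw [Complex.sq_norm, Complex.normSq_apply]; ring
      rw [h1, norm_mul, Complex.norm_conj])
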